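/- Let d ≥ 3 and let f̃ be a probability density on ℝ^d with finite Fisher information I(f̃). Then ∫_{ℝ^d} |y|^{−2} f̃(y) dy ≤ (d−2)^{−2} I(f̃). -/

import Mathlib

open MeasureTheory

set_option maxHeartbeats 1000000
section HardyAux
open MeasureTheory Set Metric

local notation "dim" => Module.finrank ℝ

variable {E : Type*} [NormedAddCommGroup E] [NormedSpace ℝ E] [MeasurableSpace E]
  [BorelSpace E] [FiniteDimensional ℝ E] [Nontrivial E] (μ : Measure E) [μ.IsAddHaarMeasure]

-- helper: integral over volumeIoiPow
lemma integral_volumeIoiPow (n : ℕ) (φ : ℝ → ℝ) :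
    ∫ r : Ioi (0:ℝ), φ r ∂(Measure.volumeIoiPow n) = ∫ r in Ioi (0:ℝ), r ^ n * φ r := by
  simp only [Measure.volumeIoiPow, ENNReal.ofReal]
  rw [integral_withDensity_eq_integral_smul
      ((measurable_subtype_coe.pow_const _).real_toNNReal),
    integral_subtype_comap measurableSet_Ioi fun a ↦ Real.toNNReal (a ^ n) • φ a,
    setIntegral_congr_fun measurableSet_Ioi fun x hx ↦ ?_]
  rw [NNReal.smul_def, Real.coe_toNNReal _ (pow_nonneg hx.out.le _), smul_eq_mul]

lemma integrable_volumeIoiPow_iff (n : ℕ) (φ : ℝ → ℝ) :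
    Integrable (fun r : Ioi (0:ℝ) => φ r) (Measure.volumeIoiPow n) ↔
      IntegrableOn (fun r => r ^ n * φ r) (Ioi (0:ℝ)) := by
  rw [Measure.volumeIoiPow]
  simp only [ENNReal.ofReal]
  rw [integrable_withDensity_iff_integrable_smul
      ((measurable_subtype_coe.pow_const _).real_toNNReal)]
  have emb := MeasurableEmbedding.subtype_coe (measurableSet_Ioi (a := (0:ℝ)))
  have h1 : (fun x : Ioi (0:ℝ) => (x.1 ^ n).toNNReal • φ x.1)
      = (fun x : ℝ => (x ^ n).toNNReal • φ x) ∘ Subtype.val := rfl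
  rw [h1, ← emb.integrable_map_iff, emb.map_comap, Subtype.range_coe]
  constructor
  · intro H
    refine H.congr ?_
    filter_upwards [ae_restrict_mem measurableSet_Ioi] with x hx
    simp [NNReal.smul_def, Real.coe_toNNReal _ (pow_nonneg hx.out.le _)]
  · intro H
    refine H.congr ?_
    filter_upwards [ae_restrict_mem measurableSet_Ioi] with x hx
    simp [NNReal.smul_def, Real.coe_toNNReal _ (pow_nonneg hx.out.le _)]

lemma comap_integrable (h : E → ℝ) (hint : Integrable h μ) :
    Integrable (fun x : ({0}ᶜ : Set E) => h x.1) (μ.comap Subtype.val) := by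
  have emb := MeasurableEmbedding.subtype_coe (measurableSet_singleton (0:E)).compl
  have h1 : (fun x : ({0}ᶜ : Set E) => h x.1) = h ∘ Subtype.val := rfl
  rw [h1, ← emb.integrable_map_iff, emb.map_comap, Subtype.range_coe]
  exact hint.restrict

lemma prod_integrable (h : E → ℝ) (hint : Integrable h μ) :
    Integrable (fun p : sphere (0:E) 1 × Ioi (0:ℝ) => h (p.2.1 • p.1.1))
      (μ.toSphere.prod (.volumeIoiPow (dim E - 1))) := by
  rw [← μ.measurePreserving_homeomorphUnitSphereProd.integrable_comp_emb
      (Homeomorph.measurableEmbedding _)]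
  have : ((fun p : sphere (0:E) 1 × Ioi (0:ℝ) => h (p.2.1 • p.1.1)) ∘
      (homeomorphUnitSphereProd E)) = fun x : ({0}ᶜ : Set E) => h x.1 := by
    funext x
    simp [homeomorphUnitSphereProd, smul_inv_smul₀ (norm_ne_zero_iff.2 x.2)]
  rw [this]
  exact comap_integrable μ h hint

lemma polar₁ (h : E → ℝ) (hint : Integrable h μ) :
    ∀ᵐ (ω : sphere (0:E) 1) ∂μ.toSphere, IntegrableOn (fun r => r ^ (dim E - 1) * h (r • (ω:E))) (Ioi (0:ℝ)) := by
  filter_upwards [(prod_integrable μ h hint).prod_right_ae] with ω hω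
  exact (integrable_volumeIoiPow_iff _ _).1 hω

lemma polar₂ (h : E → ℝ) (hint : Integrable h μ) :
    ∫ y, h y ∂μ
      = ∫ ω, (∫ r in Ioi (0:ℝ), r ^ (dim E - 1) * h (r • (ω:E))) ∂μ.toSphere := by
  have emb := MeasurableEmbedding.subtype_coe (measurableSet_singleton (0:E)).compl
  calc ∫ y, h y ∂μ = ∫ x : ({0}ᶜ : Set E), h x.1 ∂(μ.comap Subtype.val) := by
        rw [integral_subtype_comap (measurableSet_singleton _).compl h,
          MeasureTheory.restrict_compl_singleton]
    _ = ∫ p : sphere (0:E) 1 × Ioi (0:ℝ), h (p.2.1 • p.1.1)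
          ∂(μ.toSphere.prod (.volumeIoiPow (dim E - 1))) := by
        rw [← μ.measurePreserving_homeomorphUnitSphereProd.integral_comp
          (Homeomorph.measurableEmbedding _) (fun p : sphere (0:E) 1 × Ioi (0:ℝ) => h (p.2.1 • p.1.1))]
        congr 1
        funext x
        simp [homeomorphUnitSphereProd, smul_inv_smul₀ (norm_ne_zero_iff.2 x.2)]
    _ = ∫ ω, (∫ r : Ioi (0:ℝ), h (r.1 • (ω:E)) ∂(Measure.volumeIoiPow (dim E - 1))) ∂μ.toSphere :=
        integral_prod _ (prod_integrable μ h hint)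
    _ = _ := by
        refine integral_congr_ae (Filter.Eventually.of_forall fun ω => ?_)
        simpa using integral_volumeIoiPow (dim E - 1) (fun r => h (r • (ω:E)))

variable {E : Type*} [NormedAddCommGroup E] [NormedSpace ℝ E]

lemma ray_hasDerivAt (f : E → ℝ) (hdiff : Differentiable ℝ f) {d : ℕ} (hd : 3 ≤ d)
    {ε : ℝ} (hε : 0 < ε) (ω : E) (hω : ‖ω‖ = 1) {r : ℝ} (hr : 0 < r) :
    HasDerivAt (fun s => s ^ d * f (s • ω) / (s ^ 2 + ε ^ 2))
      (r ^ (d - 1) * ((fderiv ℝ f (r • ω)) (r • ω) / (‖r • ω‖ ^ 2 + ε ^ 2)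
        + f (r • ω) * (((d : ℝ) - 2) * ‖r • ω‖ ^ 2 + (d : ℝ) * ε ^ 2) / (‖r • ω‖ ^ 2 + ε ^ 2) ^ 2)) r := by
  have hu : HasDerivAt (fun s => f (s • ω)) ((fderiv ℝ f (r • ω)) ω) r := by
    have h1 : HasDerivAt (fun s : ℝ => s • ω) ω r := by
      simpa using (hasDerivAt_id r).smul_const ω
    exact (hdiff (r • ω)).hasFDerivAt.comp_hasDerivAt r h1
  have hN : HasDerivAt (fun s => s ^ d * f (s • ω))
      ((d : ℝ) * r ^ (d - 1) * f (r • ω) + r ^ d * ((fderiv ℝ f (r • ω)) ω)) r :=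
    (hasDerivAt_pow d r).mul hu
  have hD : HasDerivAt (fun s : ℝ => s ^ 2 + ε ^ 2) (2 * r) r := by
    simpa using (hasDerivAt_pow 2 r).add_const (ε ^ 2)
  have hDne : r ^ 2 + ε ^ 2 ≠ 0 := by positivity
  have := hN.div hD hDne
  refine this.congr_deriv ?_
  have hnorm : ‖r • ω‖ = r := by
    rw [norm_smul, hω, mul_one, Real.norm_eq_abs, abs_of_pos hr]
  have happ : (fderiv ℝ f (r • ω)) (r • ω) = r * (fderiv ℝ f (r • ω)) ω := by
    rw [_root_.map_smul]; simp [smul_eq_mul]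
  rw [hnorm, happ]
  obtain ⟨k, rfl⟩ : ∃ k, d = k + 3 := ⟨d - 3, by omega⟩
  push_cast
  field_simp
  ring

section Divergence
variable {d : ℕ}

local notation "Ed" => EuclideanSpace ℝ (Fin d)

lemma divergence_zero (hd : 3 ≤ d) (f : Ed → ℝ) (hmeas : Measurable f) (hpos : ∀ x, 0 ≤ f x)
    (hint : Integrable f) (hdiff : Differentiable ℝ f)
    (hgrad : Integrable fun x => ‖fderiv ℝ f x‖) {ε : ℝ} (hε : 0 < ε) :
    ∫ y : Ed, ((fderiv ℝ f y) y / (‖y‖ ^ 2 + ε ^ 2)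
      + f y * (((d : ℝ) - 2) * ‖y‖ ^ 2 + (d : ℝ) * ε ^ 2) / (‖y‖ ^ 2 + ε ^ 2) ^ 2) = 0 := by
  haveI : Nontrivial Ed := by
    have : 0 < Module.finrank ℝ Ed := by
      rw [finrank_euclideanSpace_fin]; omega
    exact Module.nontrivial_of_finrank_pos (R := ℝ) this
  set h : Ed → ℝ := fun y => ((fderiv ℝ f y) y / (‖y‖ ^ 2 + ε ^ 2)
      + f y * (((d : ℝ) - 2) * ‖y‖ ^ 2 + (d : ℝ) * ε ^ 2) / (‖y‖ ^ 2 + ε ^ 2) ^ 2) with hh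
  have hrank : Module.finrank ℝ Ed - 1 = d - 1 := by rw [finrank_euclideanSpace_fin]
  have happm : Measurable fun y : Ed => (fderiv ℝ f y) y := by
    have hc : Continuous (fun p : (Ed →L[ℝ] ℝ) × Ed => p.1 p.2) :=
      isBoundedBilinearMap_apply.continuous
    exact hc.measurable.comp ((measurable_fderiv ℝ f).prodMk measurable_id)
  have hhmeas : Measurable h := by
    apply Measurable.add
    · exact happm.div ((measurable_norm.pow_const 2).add_const _)
    · exact (hmeas.mul (((measurable_norm.pow_const 2).const_mul _).add_const _)).div
        (((measurable_norm.pow_const 2).add_const _).pow_const 2)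
  have key : ∀ t : ℝ, 0 ≤ t → t / (t ^ 2 + ε ^ 2) ≤ 1 / (2 * ε) := by
    intro t ht
    rw [div_le_div_iff₀ (by positivity) (by positivity)]
    nlinarith [sq_nonneg (t - ε)]
  have hbound : ∀ y : Ed, ‖h y‖ ≤ (1 / (2 * ε)) * ‖fderiv ℝ f y‖ + ((d : ℝ) / ε ^ 2) * f y := by
    intro y
    have h1 : |(fderiv ℝ f y) y / (‖y‖ ^ 2 + ε ^ 2)| ≤ (1 / (2 * ε)) * ‖fderiv ℝ f y‖ := by
      rw [abs_div, abs_of_pos (show (0:ℝ) < ‖y‖ ^ 2 + ε ^ 2 by positivity)]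
      have h2 : |(fderiv ℝ f y) y| ≤ ‖fderiv ℝ f y‖ * ‖y‖ := (fderiv ℝ f y).le_opNorm y
      calc |(fderiv ℝ f y) y| / (‖y‖ ^ 2 + ε ^ 2) ≤ ‖fderiv ℝ f y‖ * ‖y‖ / (‖y‖ ^ 2 + ε ^ 2) := by
            apply div_le_div_of_nonneg_right h2 ?_ |>.trans_eq rfl
            positivity
        _ = ‖fderiv ℝ f y‖ * (‖y‖ / (‖y‖ ^ 2 + ε ^ 2)) := by ring
        _ ≤ ‖fderiv ℝ f y‖ * (1 / (2 * ε)) := by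
            exact mul_le_mul_of_nonneg_left (key _ (norm_nonneg y)) (norm_nonneg _)
        _ = (1 / (2 * ε)) * ‖fderiv ℝ f y‖ := by ring
    have h3 : |f y * (((d : ℝ) - 2) * ‖y‖ ^ 2 + (d : ℝ) * ε ^ 2) / (‖y‖ ^ 2 + ε ^ 2) ^ 2|
        ≤ ((d : ℝ) / ε ^ 2) * f y := by
      have hd3 : (3:ℝ) ≤ (d:ℝ) := by exact_mod_cast hd
      have hnum : 0 ≤ ((d : ℝ) - 2) * ‖y‖ ^ 2 + (d : ℝ) * ε ^ 2 := by nlinarith [sq_nonneg ‖y‖]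
      have hfy := hpos y
      rw [abs_of_nonneg (div_nonneg (mul_nonneg hfy hnum) (by positivity))]
      rw [div_le_iff₀ (by positivity), div_mul_eq_mul_div, div_mul_eq_mul_div,
        le_div_iff₀ (by positivity)]
      nlinarith [mul_nonneg hfy (sq_nonneg (‖y‖^2)),
        mul_nonneg (mul_nonneg hfy (sq_nonneg ‖y‖)) (sq_nonneg ε)]
    calc ‖h y‖ ≤ |(fderiv ℝ f y) y / (‖y‖ ^ 2 + ε ^ 2)|
          + |f y * (((d : ℝ) - 2) * ‖y‖ ^ 2 + (d : ℝ) * ε ^ 2) / (‖y‖ ^ 2 + ε ^ 2) ^ 2| :=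
        abs_add_le _ _
      _ ≤ _ := add_le_add h1 h3
  have hhint : Integrable h := by
    refine Integrable.mono' ((hgrad.const_mul (1 / (2 * ε))).add (hint.const_mul ((d : ℝ) / ε ^ 2)))
      hhmeas.aestronglyMeasurable (Filter.Eventually.of_forall hbound)
  rw [polar₂ volume h hhint]
  have hae : ∀ᵐ (ω : sphere (0:Ed) 1) ∂(volume : Measure Ed).toSphere,
      (∫ r in Ioi (0:ℝ), r ^ (Module.finrank ℝ Ed - 1) * h (r • (ω:Ed))) = 0 := by
    filter_upwards [polar₁ volume h hhint, polar₁ volume f hint] with ω hω1 hω2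
    have hωn : ‖(ω : Ed)‖ = 1 := mem_sphere_zero_iff_norm.1 ω.2
    set F : ℝ → ℝ := fun s => s ^ d * f (s • (ω : Ed)) / (s ^ 2 + ε ^ 2) with hF
    have hder : ∀ r ∈ Ioi (0:ℝ), HasDerivAt F (r ^ (Module.finrank ℝ Ed - 1) * h (r • (ω : Ed))) r := by
      intro r hr
      rw [hrank]
      exact ray_hasDerivAt f hdiff hd hε (ω : Ed) hωn hr
    have hcontF : Continuous F := by
      apply Continuous.div
      · exact (continuous_pow d).mul ((hdiff.continuous).comp (continuous_id.smul continuous_const))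
      · exact (continuous_pow 2).add continuous_const
      · intro s; positivity
    have hFint : IntegrableOn F (Ioi (0:ℝ)) := by
      rw [hrank] at hω2
      refine Integrable.mono' (hω2.const_mul (1 / (2 * ε))) hcontF.aestronglyMeasurable.restrict ?_
      filter_upwards [ae_restrict_mem measurableSet_Ioi] with s hs
      have hs0 : (0:ℝ) < s := hs
      have hfs := hpos (s • (ω : Ed))
      simp only [Real.norm_eq_abs, hF]
      have h4 : s ^ d * f (s • (ω : Ed)) / (s ^ 2 + ε ^ 2)
          = (s / (s ^ 2 + ε ^ 2)) * (s ^ (d-1) * f (s • (ω : Ed))) := by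
        obtain ⟨k, rfl⟩ : ∃ k, d = k + 3 := ⟨d - 3, by omega⟩
        rw [show k + 3 - 1 = k + 2 by omega]
        field_simp
        ring
      rw [h4, abs_of_nonneg (by positivity)]
      rw [show (1 / (2*ε)) * (s ^ (d-1) * f (s • (ω:Ed))) = (s ^ (d-1) * f (s • (ω:Ed))) * (1/(2*ε)) by ring]
      rw [show (s / (s ^ 2 + ε ^ 2)) * (s ^ (d-1) * f (s • (ω:Ed))) = (s ^ (d-1) * f (s • (ω:Ed))) * (s / (s ^ 2 + ε ^ 2)) by ring]
      exact mul_le_mul_of_nonneg_left (key s hs0.le) (by positivity)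
    have htend : Filter.Tendsto F Filter.atTop (nhds 0) :=
      tendsto_zero_of_hasDerivAt_of_integrableOn_Ioi hder hω1 hFint
    have hF0 : F 0 = 0 := by
      simp [hF, zero_pow (by omega : d ≠ 0)]
    have := integral_Ioi_of_hasDerivAt_of_tendsto (hcontF.continuousWithinAt) hder hω1 htend
    rw [this, hF0, sub_zero]
  rw [integral_congr_ae hae, integral_zero]

lemma fderiv_zero_of_zero (f : Ed → ℝ) (hpos : ∀ x, 0 ≤ f x) {x : Ed} (hx : f x = 0) :
    fderiv ℝ f x = 0 := by
  have : IsLocalMin f x := Filter.Eventually.of_forall (fun y => by rw [hx]; exact hpos y)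
  exact this.fderiv_eq_zero

lemma integrable_a (f : Ed → ℝ) (hmeas : Measurable f) (hpos : ∀ x, 0 ≤ f x)
    (hint : Integrable f) {ε : ℝ} (hε : 0 < ε) :
    Integrable (fun y : Ed => f y * ‖y‖ ^ 2 / (‖y‖ ^ 2 + ε ^ 2) ^ 2) := by
  refine Integrable.mono' (hint.const_mul (ε ^ 2)⁻¹)
    ((hmeas.mul (measurable_norm.pow_const 2)).div
      (((measurable_norm.pow_const 2).add_const _).pow_const 2)).aestronglyMeasurable
    (Filter.Eventually.of_forall fun y => ?_)
  have hfy := hpos y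
  rw [Real.norm_eq_abs, abs_of_nonneg (by positivity)]
  rw [div_le_iff₀ (by positivity), inv_mul_eq_div, div_mul_eq_mul_div, le_div_iff₀ (by positivity)]
  nlinarith [mul_nonneg hfy (sq_nonneg (‖y‖^2)), mul_nonneg (mul_nonneg hfy (sq_nonneg ‖y‖)) (sq_nonneg ε),
    mul_nonneg hfy (sq_nonneg (‖y‖*ε)), mul_nonneg hfy (sq_nonneg ε), mul_nonneg hfy (sq_nonneg (ε*ε))]

lemma eps_bound (hd : 3 ≤ d) (f : Ed → ℝ) (hmeas : Measurable f) (hpos : ∀ x, 0 ≤ f x)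
    (hint : Integrable f) (hdiff : Differentiable ℝ f)
    (hgrad : Integrable fun x => ‖fderiv ℝ f x‖)
    (hI : Integrable fun x => ‖fderiv ℝ f x‖ ^ 2 / f x) {ε : ℝ} (hε : 0 < ε) :
    ∫ y : Ed, f y * ‖y‖ ^ 2 / (‖y‖ ^ 2 + ε ^ 2) ^ 2
      ≤ (((d : ℝ) - 2) ^ 2)⁻¹ * ∫ x : Ed, ‖fderiv ℝ f x‖ ^ 2 / f x := by
  set c : ℝ := (d : ℝ) - 2 with hc
  have hc0 : 0 < c := by
    have : (3:ℝ) ≤ (d:ℝ) := by exact_mod_cast hd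
    simp only [hc]; linarith
  set A := ∫ y : Ed, f y * ‖y‖ ^ 2 / (‖y‖ ^ 2 + ε ^ 2) ^ 2 with hA
  set I := ∫ x : Ed, ‖fderiv ℝ f x‖ ^ 2 / f x with hI2
  have haint := integrable_a f hmeas hpos hint hε
  have happm : Measurable fun y : Ed => (fderiv ℝ f y) y := by
    have hcm : Continuous (fun p : (Ed →L[ℝ] ℝ) × Ed => p.1 p.2) :=
      isBoundedBilinearMap_apply.continuous
    exact hcm.measurable.comp ((measurable_fderiv ℝ f).prodMk measurable_id)
  have hgint : Integrable (fun y : Ed => (fderiv ℝ f y) y / (‖y‖ ^ 2 + ε ^ 2)) := by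
    refine Integrable.mono' (hgrad.const_mul (1 / (2*ε)))
      (happm.div ((measurable_norm.pow_const 2).add_const _)).aestronglyMeasurable
      (Filter.Eventually.of_forall fun y => ?_)
    rw [Real.norm_eq_abs, abs_div, abs_of_pos (show (0:ℝ) < ‖y‖ ^ 2 + ε ^ 2 by positivity)]
    have h2 : |(fderiv ℝ f y) y| ≤ ‖fderiv ℝ f y‖ * ‖y‖ := (fderiv ℝ f y).le_opNorm y
    rw [div_le_iff₀ (by positivity)]
    have hkey : 2 * ε * ‖y‖ ≤ ‖y‖ ^ 2 + ε ^ 2 := by nlinarith [sq_nonneg (‖y‖ - ε)]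
    calc |(fderiv ℝ f y) y| ≤ ‖fderiv ℝ f y‖ * ‖y‖ := h2
      _ ≤ 1 / (2*ε) * ‖fderiv ℝ f y‖ * (‖y‖ ^ 2 + ε ^ 2) := by
          rw [div_mul_eq_mul_div, one_mul, div_mul_eq_mul_div, le_div_iff₀ (by positivity)]
          calc ‖fderiv ℝ f y‖ * ‖y‖ * (2*ε) = ‖fderiv ℝ f y‖ * (2*ε*‖y‖) := by ring
            _ ≤ ‖fderiv ℝ f y‖ * (‖y‖ ^ 2 + ε ^ 2) :=
                mul_le_mul_of_nonneg_left hkey (norm_nonneg _)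
  have hbint : Integrable (fun y : Ed =>
      f y * (((d : ℝ) - 2) * ‖y‖ ^ 2 + (d : ℝ) * ε ^ 2) / (‖y‖ ^ 2 + ε ^ 2) ^ 2) := by
    refine Integrable.mono' (hint.const_mul ((d : ℝ) / ε ^ 2))
      ((hmeas.mul (((measurable_norm.pow_const 2).const_mul _).add_const _)).div
        (((measurable_norm.pow_const 2).add_const _).pow_const 2)).aestronglyMeasurable
      (Filter.Eventually.of_forall fun y => ?_)
    have hfy := hpos y
    have hd3 : (3:ℝ) ≤ (d:ℝ) := by exact_mod_cast hd
    have hnum : 0 ≤ ((d : ℝ) - 2) * ‖y‖ ^ 2 + (d : ℝ) * ε ^ 2 := by nlinarith [sq_nonneg ‖y‖]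
    rw [Real.norm_eq_abs, abs_of_nonneg (div_nonneg (mul_nonneg hfy hnum) (by positivity))]
    rw [div_le_iff₀ (by positivity), div_mul_eq_mul_div, div_mul_eq_mul_div,
      le_div_iff₀ (by positivity)]
    nlinarith [mul_nonneg hfy (sq_nonneg (‖y‖^2)),
      mul_nonneg (mul_nonneg hfy (sq_nonneg ‖y‖)) (sq_nonneg ε)]
  -- divergence identity
  have hdiv := divergence_zero hd f hmeas hpos hint hdiff hgrad hε
  rw [integral_add hgint hbint] at hdiv
  -- pointwise : c * a ≤ b
  have hstep1 : c * A ≤ ∫ y : Ed,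
      f y * (((d : ℝ) - 2) * ‖y‖ ^ 2 + (d : ℝ) * ε ^ 2) / (‖y‖ ^ 2 + ε ^ 2) ^ 2 := by
    rw [hA, ← integral_const_mul]
    refine integral_mono (haint.const_mul c) hbint fun y => ?_
    have hfy := hpos y
    have hd3 : (3:ℝ) ≤ (d:ℝ) := by exact_mod_cast hd
    simp only [hc]
    calc c * (f y * ‖y‖ ^ 2 / (‖y‖ ^ 2 + ε ^ 2) ^ 2)
        = c * (f y * ‖y‖ ^ 2) / (‖y‖ ^ 2 + ε ^ 2) ^ 2 := by ring
      _ ≤ f y * (c * ‖y‖ ^ 2 + (d:ℝ) * ε ^ 2) / (‖y‖ ^ 2 + ε ^ 2) ^ 2 := by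
          have h5 : c * (f y * ‖y‖ ^ 2) ≤ f y * (c * ‖y‖ ^ 2 + (d:ℝ) * ε ^ 2) := by
            have h6 : 0 ≤ f y * ((d:ℝ) * ε ^ 2) := by positivity
            nlinarith
          gcongr
  -- pointwise Young
  have hstep2 : (∫ y : Ed, -((fderiv ℝ f y) y / (‖y‖ ^ 2 + ε ^ 2)))
      ≤ (1/(2*c)) * I + (c/2) * A := by
    rw [hI2, hA, ← integral_const_mul, ← integral_const_mul, ← integral_add
      (hI.const_mul _) (haint.const_mul _)]
    refine integral_mono hgint.neg ((hI.const_mul _).add (haint.const_mul _)) fun y => ?_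
    by_cases hfy : f y = 0
    · have hz := fderiv_zero_of_zero f hpos hfy
      simp [hfy, hz]
    · have hfy' : 0 < f y := lt_of_le_of_ne (hpos y) (Ne.symm hfy)
      have hρ : (0:ℝ) < ‖y‖ ^ 2 + ε ^ 2 := by positivity
      have h2 : -((fderiv ℝ f y) y) ≤ ‖fderiv ℝ f y‖ * ‖y‖ := by
        have := (fderiv ℝ f y).le_opNorm y
        have h3 : |(fderiv ℝ f y) y| ≤ ‖fderiv ℝ f y‖ * ‖y‖ := this
        nlinarith [abs_nonneg ((fderiv ℝ f y) y), neg_abs_le ((fderiv ℝ f y) y)]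
      have hkey : (1/(2*c)) * (‖fderiv ℝ f y‖ ^ 2 / f y) + (c/2) * (f y * ‖y‖ ^ 2 / (‖y‖ ^ 2 + ε ^ 2) ^ 2)
          - ‖fderiv ℝ f y‖ * ‖y‖ / (‖y‖ ^ 2 + ε ^ 2)
          = (‖fderiv ℝ f y‖ / f y - c * ‖y‖ / (‖y‖ ^ 2 + ε ^ 2)) ^ 2 * f y / (2*c) := by
        field_simp
        ring
      have hkey2 : ‖fderiv ℝ f y‖ * ‖y‖ / (‖y‖ ^ 2 + ε ^ 2)
          ≤ (1/(2*c)) * (‖fderiv ℝ f y‖ ^ 2 / f y) + (c/2) * (f y * ‖y‖ ^ 2 / (‖y‖ ^ 2 + ε ^ 2) ^ 2) := by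
        nlinarith [hkey, div_nonneg (mul_nonneg (sq_nonneg (‖fderiv ℝ f y‖ / f y - c * ‖y‖ / (‖y‖ ^ 2 + ε ^ 2))) hfy'.le) (by positivity : (0:ℝ) ≤ 2*c)]
      refine le_trans ?_ hkey2
      calc -((fderiv ℝ f y) y / (‖y‖ ^ 2 + ε ^ 2))
          = (-((fderiv ℝ f y) y)) / (‖y‖ ^ 2 + ε ^ 2) := by ring
        _ ≤ ‖fderiv ℝ f y‖ * ‖y‖ / (‖y‖ ^ 2 + ε ^ 2) := by gcongr
  -- combine
  have h6 : (∫ y : Ed, f y * (((d : ℝ) - 2) * ‖y‖ ^ 2 + (d : ℝ) * ε ^ 2) / (‖y‖ ^ 2 + ε ^ 2) ^ 2)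
      = ∫ y : Ed, -((fderiv ℝ f y) y / (‖y‖ ^ 2 + ε ^ 2)) := by
    rw [integral_neg]; linarith
  have hfinal : c * A ≤ 1/(2*c) * I + (c/2) * A := by
    rw [h6] at hstep1; linarith
  show A ≤ (c ^ 2)⁻¹ * I
  rw [inv_mul_eq_div, le_div_iff₀ (by positivity : (0:ℝ) < c ^ 2)]
  have h13 : (c/2)*A ≤ 1/(2*c)*I := by linarith
  have h14 := mul_le_mul_of_nonneg_right h13 (by positivity : (0:ℝ) ≤ 2*c)
  calc A * c ^ 2 = (c/2)*A*(2*c) := by ring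
    _ ≤ 1/(2*c)*I*(2*c) := h14
    _ = I := by field_simp
end Divergence

end HardyAux

/-- Hardy-type inequality: for `d ≥ 3` and a probability density `f` on `ℝ^d` with finite
Fisher information `I(f)`, one has `∫ |y|^{-2} f(y) dy ≤ (d-2)^{-2} I(f)`. -/
theorem stmt_9 {d : ℕ} (hd : 3 ≤ d) (f : EuclideanSpace ℝ (Fin d) → ℝ)
    (hmeas : Measurable f) (hpos : ∀ x, 0 ≤ f x) (hmass : (∫ x, f x) = 1)
    (hdiff : Differentiable ℝ f)
    (hI : Integrable (fun x => ‖gradient f x‖ ^ 2 / f x)) :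
    ∫ y, f y / ‖y‖ ^ 2 ≤ (((d : ℝ) - 2) ^ 2)⁻¹ * ∫ x, ‖gradient f x‖ ^ 2 / f x := by
  haveI : Nontrivial (EuclideanSpace ℝ (Fin d)) := by
    apply Module.nontrivial_of_finrank_pos (R := ℝ)
    rw [finrank_euclideanSpace_fin]; omega
  have hIeq : (fun x : EuclideanSpace ℝ (Fin d) => ‖gradient f x‖ ^ 2 / f x)
      = fun x => ‖fderiv ℝ f x‖ ^ 2 / f x := by
    funext x
    rw [show ‖gradient f x‖ = ‖fderiv ℝ f x‖ from by
      rw [gradient]; exact LinearIsometryEquiv.norm_map _ _]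
  rw [hIeq] at hI ⊢
  set I := ∫ x : EuclideanSpace ℝ (Fin d), ‖fderiv ℝ f x‖ ^ 2 / f x with hIdef
  have hint : Integrable f := by
    by_contra h
    rw [integral_undef h] at hmass
    norm_num at hmass
  have hgrad : Integrable fun x : EuclideanSpace ℝ (Fin d) => ‖fderiv ℝ f x‖ := by
    refine Integrable.mono' ((hI.const_mul (1/2)).add (hint.const_mul (1/2)))
      (measurable_fderiv ℝ f).norm.aestronglyMeasurable (Filter.Eventually.of_forall fun x => ?_)
    simp only [Pi.add_apply]
    rw [Real.norm_eq_abs, abs_of_nonneg (norm_nonneg _)]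
    by_cases hfx : f x = 0
    · have hz := fderiv_zero_of_zero f hpos hfx
      simp [hz, hfx]
    · have hfx' : 0 < f x := lt_of_le_of_ne (hpos x) (Ne.symm hfx)
      have hkey : 1/2 * (‖fderiv ℝ f x‖ ^ 2 / f x) + 1/2 * f x - ‖fderiv ℝ f x‖
          = (‖fderiv ℝ f x‖ - f x) ^ 2 / (2 * f x) := by field_simp; ring
      nlinarith [div_nonneg (sq_nonneg (‖fderiv ℝ f x‖ - f x)) (by positivity : (0:ℝ) ≤ 2 * f x)]
  have hI0 : 0 ≤ I := integral_nonneg fun x => div_nonneg (by positivity) (hpos x)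
  have hd3 : (3:ℝ) ≤ (d:ℝ) := by exact_mod_cast hd
  set K := (((d:ℝ) - 2) ^ 2)⁻¹ * I with hK
  have hK0 : 0 ≤ K := mul_nonneg (inv_nonneg.2 (sq_nonneg _)) hI0
  set a : ℕ → EuclideanSpace ℝ (Fin d) → ℝ :=
    fun n y => f y * ‖y‖ ^ 2 / (‖y‖ ^ 2 + (1/((n:ℝ)+1)) ^ 2) ^ 2 with ha
  have hεn : ∀ n : ℕ, (0:ℝ) < 1/((n:ℝ)+1) := fun n => by positivity
  have haint : ∀ n, Integrable (a n) := fun n => integrable_a f hmeas hpos hint (hεn n)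
  have hbound : ∀ n, ∫ y, a n y ≤ K := fun n =>
    eps_bound hd f hmeas hpos hint hdiff hgrad hI (hεn n)
  have hanonneg : ∀ n y, 0 ≤ a n y := fun n y =>
    div_nonneg (mul_nonneg (hpos y) (sq_nonneg _)) (by positivity)
  have hamono : ∀ y, Monotone fun n => a n y := by
    intro y
    apply monotone_nat_of_le_succ
    intro n
    simp only [ha]
    have hD : (‖y‖ ^ 2 + (1/(((n:ℝ)+1)+1)) ^ 2) ≤ (‖y‖ ^ 2 + (1/((n:ℝ)+1)) ^ 2) := by
      have h1 : (1:ℝ)/(((n:ℝ)+1)+1) ≤ 1/((n:ℝ)+1) :=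
        one_div_le_one_div_of_le (by positivity) (by linarith)
      have h2 : ((1:ℝ)/(((n:ℝ)+1)+1)) ^ 2 ≤ (1/((n:ℝ)+1)) ^ 2 := by
        apply pow_le_pow_left₀ (by positivity) h1
      linarith
    have hD2 : (‖y‖ ^ 2 + (1/(((n:ℝ)+1)+1)) ^ 2) ^ 2 ≤ (‖y‖ ^ 2 + (1/((n:ℝ)+1)) ^ 2) ^ 2 := by
      apply pow_le_pow_left₀ (by positivity) hD
    have := div_le_div_of_nonneg_left (mul_nonneg (hpos y) (sq_nonneg ‖y‖))
      (show (0:ℝ) < (‖y‖ ^ 2 + (1/(((n:ℝ)+1)+1)) ^ 2) ^ 2 by positivity) hD2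
    push_cast at this ⊢
    convert this using 3 <;> ring
  have hmeasa : ∀ n, Measurable fun y => ENNReal.ofReal (a n y) := fun n =>
    ((hmeas.mul (measurable_norm.pow_const 2)).div
      (((measurable_norm.pow_const 2).add_const _).pow_const 2)).ennreal_ofReal
  have hTend : ∀ y : EuclideanSpace ℝ (Fin d), y ≠ 0 →
      Filter.Tendsto (fun n => a n y) Filter.atTop (nhds (f y / ‖y‖ ^ 2)) := by
    intro y hy
    have hyn : ‖y‖ ≠ 0 := norm_ne_zero_iff.2 hy
    have h0 : Filter.Tendsto (fun n : ℕ => 1/((n:ℝ)+1)) Filter.atTop (nhds 0) :=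
      tendsto_one_div_add_atTop_nhds_zero_nat
    have h1 : Filter.Tendsto (fun n : ℕ => (‖y‖ ^ 2 + (1/((n:ℝ)+1)) ^ 2) ^ 2)
        Filter.atTop (nhds ((‖y‖ ^ 2 + 0 ^ 2) ^ 2)) := (((h0.pow 2).const_add _).pow 2)
    have h2 := Filter.Tendsto.div (tendsto_const_nhds
      (x := f y * ‖y‖ ^ 2) (f := Filter.atTop (α := ℕ))) h1 (by positivity)
    have h3 : f y * ‖y‖ ^ 2 / (‖y‖ ^ 2 + 0 ^ 2) ^ 2 = f y / ‖y‖ ^ 2 := by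
      field_simp
      ring
    rw [h3] at h2
    exact h2
  have key : ∫⁻ y : EuclideanSpace ℝ (Fin d), ENNReal.ofReal (f y / ‖y‖ ^ 2)
      = ⨆ n, ∫⁻ y, ENNReal.ofReal (a n y) := by
    rw [← lintegral_iSup hmeasa (fun m n hmn y => ENNReal.ofReal_le_ofReal (hamono y hmn))]
    refine lintegral_congr_ae ?_
    have h0 : ∀ᵐ y : EuclideanSpace ℝ (Fin d) ∂volume, y ≠ 0 := by
      filter_upwards [(Set.countable_singleton
        (0 : EuclideanSpace ℝ (Fin d))).ae_notMem volume] with y hy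
      simpa using hy
    filter_upwards [h0] with y hy
    have hmono2 : Monotone fun n => ENNReal.ofReal (a n y) :=
      fun m n hmn => ENNReal.ofReal_le_ofReal (hamono y hmn)
    have ht : Filter.Tendsto (fun n => ENNReal.ofReal (a n y)) Filter.atTop
        (nhds (ENNReal.ofReal (f y / ‖y‖ ^ 2))) :=
      (ENNReal.continuous_ofReal.tendsto _).comp (hTend y hy)
    exact (tendsto_nhds_unique (tendsto_atTop_iSup hmono2) ht).symm
  have hKbound : ∫⁻ y : EuclideanSpace ℝ (Fin d), ENNReal.ofReal (f y / ‖y‖ ^ 2)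
      ≤ ENNReal.ofReal K := by
    rw [key]
    refine iSup_le fun n => ?_
    rw [← ofReal_integral_eq_lintegral_ofReal (haint n)
      (Filter.Eventually.of_forall (hanonneg n))]
    exact ENNReal.ofReal_le_ofReal (hbound n)
  have hmeasT : Measurable fun y : EuclideanSpace ℝ (Fin d) => f y / ‖y‖ ^ 2 :=
    hmeas.div (measurable_norm.pow_const 2)
  have hTnonneg : ∀ y : EuclideanSpace ℝ (Fin d), 0 ≤ f y / ‖y‖ ^ 2 :=
    fun y => div_nonneg (hpos y) (by positivity)
  rw [integral_eq_lintegral_of_nonneg_ae (Filter.Eventually.of_forall hTnonneg)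
    hmeasT.aestronglyMeasurable]
  calc (∫⁻ y : EuclideanSpace ℝ (Fin d), ENNReal.ofReal (f y / ‖y‖ ^ 2)).toReal
      ≤ (ENNReal.ofReal K).toReal := by
        apply ENNReal.toReal_mono ENNReal.ofReal_ne_top hKbound
    _ = K := ENNReal.toReal_ofReal hK0
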